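/- Let R be a fusion ring with basis of simple objects, let ψ be a basis element with ψ·ψ = 1, and suppose there exist basis elements a, b, c with N_{ab}^c > 0 and N_{ab}^{c·ψ} > 0. Then any function ζ from basis elements to U(1) satisfying ζ(a)ζ(b) = ζ(c) whenever N_{ab}^c > 0 must satisfy ζ(ψ) = 1. -/
import Mathlib

/-- In a fusion ring with basis of simple objects and structure
constants `N`, with a distinguished invertible basis element ψ satisfying
ψ·ψ = 1 (i.e. `N ψ ψ one > 0` with ψ×ψ = 1 exactly), suppose there are basis
elements a, b, c with N_{ab}^c > 0 and N_{ab}^{c·ψ} > 0 (here `cψ` denotes the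
simple object c·ψ, so that `N c ψ cψ > 0`). Then any U(1)-valued function ζ on
the basis with ζ(x)ζ(y) = ζ(z) whenever N_{xy}^z > 0 must satisfy ζ(ψ) = 1. -/
theorem stmt1 {B : Type*} (N : B → B → B → ℕ) (one ψ a b c cψ : B)
    (hψψ : 0 < N ψ ψ one)
    (hψorder : ∀ z, 0 < N ψ ψ z → z = one)
    (h1 : 0 < N a b c) (h2 : 0 < N a b cψ) (h3 : 0 < N c ψ cψ)
    (ζ : B → ℂ) (hone : ζ one = 1) (hnorm : ∀ x, ‖ζ x‖ = 1)
    (hfus : ∀ x y z, 0 < N x y z → ζ x * ζ y = ζ z) :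
    ζ ψ = 1 := by
  have hc : ζ c = ζ cψ := (hfus a b c h1).symm.trans (hfus a b cψ h2)
  have h4 := hfus c ψ cψ h3
  have hc0 : ζ c ≠ 0 := by
    intro h; have := hnorm c; rw [h] at this; simp at this
  have : ζ c * ζ ψ = ζ c * 1 := by rw [h4, mul_one, hc]
  exact mul_left_cancel₀ hc0 this
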